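/- Let $m \geq 1$ and let $A_0,\dots,A_m$ be positive integers with lcm $A$ and $a_i = A/A_i$. Then for every integer $p \geq 1$ and every tuple of nonnegative integers $(c_0,\dots,c_m)$ with $\sum_i c_i A_i \geq pmA$, the tuple can be written as a sum $(c_0,\dots,c_m) = \sum_{j=1}^p (e_0^{(j)},\dots,e_m^{(j)})$ of $p$ tuples of nonnegative integers each satisfying $\sum_i e_i^{(j)} A_i \geq mA$. -/

import Mathlib

/-- One piece of weight exactly `m * L` can be split off when the total weight
is at least `2 * m * L`. -/
lemma stmt17_piece (m L : ℕ) (hm : 1 ≤ m) (hL : 0 < L)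
    (A a : ℕ → ℕ) (hApos : ∀ i ≤ m, 0 < A i)
    (haA : ∀ i ≤ m, a i * A i = L) (c : ℕ → ℕ)
    (hc : 2 * (m * L) ≤ ∑ i ∈ Finset.range (m + 1), c i * A i) :
    ∃ g : ℕ → ℕ, (∀ i ≤ m, g i ≤ c i) ∧
      (∑ i ∈ Finset.range (m + 1), g i * A i) = m * L := by
  set q : ℕ → ℕ := fun i => c i / a i with hq
  set Q : ℕ → ℕ := fun k => ∑ i ∈ Finset.range k, q i with hQ
  have hQmono : Monotone Q := by
    intro k l hkl
    exact Finset.sum_le_sum_of_subset (Finset.range_subset_range.2 hkl)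
  have hQsucc : ∀ k, Q (k + 1) = Q k + q k := by
    intro k; simp [hQ, Finset.sum_range_succ]
  -- key counting: Q (m+1) ≥ m
  have hkey : m ≤ Q (m + 1) := by
    by_contra hQm
    push_neg at hQm
    have h1 : ∀ i ∈ Finset.range (m + 1), c i * A i + 1 ≤ q i * L + L := by
      intro i hi
      rw [Finset.mem_range_succ_iff] at hi
      have hA := hApos i hi
      have ha : 0 < a i := by
        have h := haA i hi
        rcases Nat.eq_zero_or_pos (a i) with h' | h'
        · rw [h'] at h; simp at h; omega
        · exact h'
      have hdm := Nat.div_add_mod (c i) (a i)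
      have hlt : c i % a i < a i := Nat.mod_lt _ ha
      have h2 : c i + 1 ≤ (q i + 1) * a i := by
        have heq : (q i + 1) * a i = a i * (c i / a i) + a i := by
          simp only [hq]; ring
        omega
      calc c i * A i + 1 ≤ c i * A i + A i := by omega
        _ = (c i + 1) * A i := by ring
        _ ≤ ((q i + 1) * a i) * A i := Nat.mul_le_mul_right _ h2
        _ = (q i + 1) * (a i * A i) := by ring
        _ = (q i + 1) * L := by rw [haA i hi]
        _ = q i * L + L := by ring
    have h3 : (∑ i ∈ Finset.range (m + 1), c i * A i) + (m + 1)
        ≤ Q (m + 1) * L + (m + 1) * L := by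
      have := Finset.sum_le_sum h1
      simp only [Finset.sum_add_distrib, Finset.sum_const, Finset.card_range,
        smul_eq_mul, mul_one, ← Finset.sum_mul] at this ⊢
      simpa [hQ] using this
    have h4 : Q (m + 1) * L ≤ (m - 1) * L := Nat.mul_le_mul_right _ (by omega)
    have h5 : (m - 1) * L + (m + 1) * L = 2 * (m * L) := by
      have : m - 1 + (m + 1) = 2 * m := by omega
      calc (m - 1) * L + (m + 1) * L = (m - 1 + (m + 1)) * L := by ring
        _ = 2 * m * L := by rw [this]
        _ = 2 * (m * L) := by ring
    omega
  set n : ℕ → ℕ := fun i => min (Q (i + 1)) m - min (Q i) m with hn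
  have hnq : ∀ i, n i ≤ q i := by
    intro i
    have := hQsucc i
    simp only [hn]
    omega
  refine ⟨fun i => a i * n i, ?_, ?_⟩
  · intro i hi
    calc a i * n i ≤ a i * q i := Nat.mul_le_mul_left _ (hnq i)
      _ = a i * (c i / a i) := rfl
      _ ≤ c i := Nat.mul_div_le (c i) (a i)
  · have hsum : ∑ i ∈ Finset.range (m + 1), a i * n i * A i
        = ∑ i ∈ Finset.range (m + 1), n i * L := by
      refine Finset.sum_congr rfl fun i hi => ?_
      rw [Finset.mem_range_succ_iff] at hi
      calc a i * n i * A i = n i * (a i * A i) := by ring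
        _ = n i * L := by rw [haA i hi]
    rw [hsum, ← Finset.sum_mul]
    have htel : ∑ i ∈ Finset.range (m + 1), n i = m := by
      have h := Finset.sum_range_tsub (f := fun k => min (Q k) m)
        (fun k l hkl => min_le_min (hQmono hkl) le_rfl) (m + 1)
      simp only [hn]
      rw [h]
      simp [hQ, Nat.min_eq_right hkey]
      exact hkey
    rw [htel]

lemma stmt17_aux (m L : ℕ) (hm : 1 ≤ m) (hL : 0 < L)
    (A a : ℕ → ℕ) (hApos : ∀ i ≤ m, 0 < A i)
    (haA : ∀ i ≤ m, a i * A i = L) :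
    ∀ p, 1 ≤ p → ∀ c : ℕ → ℕ,
      p * m * L ≤ ∑ i ∈ Finset.range (m + 1), c i * A i →
      ∃ e : ℕ → ℕ → ℕ,
        (∀ i ≤ m, c i = ∑ j ∈ Finset.range p, e j i) ∧
        ∀ j < p, m * L ≤ ∑ i ∈ Finset.range (m + 1), e j i * A i := by
  intro p hp
  induction p, hp using Nat.le_induction with
  | base =>
    intro c hc
    refine ⟨fun _ i => c i, fun i _ => by simp, fun j hj => ?_⟩
    interval_cases j
    simpa using hc
  | succ p hp ih =>
    intro c hc
    have h2 : 2 * (m * L) ≤ ∑ i ∈ Finset.range (m + 1), c i * A i := by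
      calc 2 * (m * L) = 2 * m * L := by ring
        _ ≤ (p + 1) * m * L :=
          Nat.mul_le_mul_right _ (Nat.mul_le_mul_right _ (by omega))
        _ ≤ _ := hc
    obtain ⟨g, hgle, hgw⟩ := stmt17_piece m L hm hL A a hApos haA c h2
    set c' : ℕ → ℕ := fun i => c i - g i with hc'
    have hsplit : (∑ i ∈ Finset.range (m + 1), c' i * A i) + m * L
        = ∑ i ∈ Finset.range (m + 1), c i * A i := by
      rw [← hgw, ← Finset.sum_add_distrib]
      refine Finset.sum_congr rfl fun i hi => ?_
      rw [Finset.mem_range_succ_iff] at hi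
      have := hgle i hi
      simp only [hc']
      rw [← Nat.add_mul]
      congr 1
      omega
    have hc'w : p * m * L ≤ ∑ i ∈ Finset.range (m + 1), c' i * A i := by
      have : (p + 1) * m * L = p * m * L + m * L := by ring
      omega
    obtain ⟨e', he'1, he'2⟩ := ih c' hc'w
    refine ⟨fun j i => if j < p then e' j i else g i, fun i hi => ?_, fun j hj => ?_⟩
    · rw [Finset.sum_range_succ]
      simp only [lt_irrefl, if_false]
      have : ∑ j ∈ Finset.range p, (if j < p then e' j i else g i)
          = ∑ j ∈ Finset.range p, e' j i := by
        refine Finset.sum_congr rfl fun j hj => ?_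
        rw [Finset.mem_range] at hj
        simp [hj]
      rw [this, ← he'1 i hi]
      have := hgle i hi
      simp only [hc']
      omega
    · rcases Nat.lt_or_ge j p with h | h
      · simpa [h] using he'2 j h
      · have hjp : j = p := by omega
        subst hjp
        simp only [lt_irrefl, if_false]
        rw [hgw]

theorem stmt17 (m : ℕ) (hm : 1 ≤ m)
    (A : ℕ → ℕ) (hApos : ∀ i ≤ m, 0 < A i)
    (L : ℕ) (hL : L = (Finset.range (m + 1)).lcm A)
    (a : ℕ → ℕ) (ha : ∀ i ≤ m, a i = L / A i)
    (p : ℕ) (hp : 1 ≤ p) (c : ℕ → ℕ)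
    (hc : p * m * L ≤ ∑ i ∈ Finset.range (m + 1), c i * A i) :
    ∃ e : ℕ → ℕ → ℕ,
      (∀ i ≤ m, c i = ∑ j ∈ Finset.range p, e j i) ∧
      ∀ j < p, m * L ≤ ∑ i ∈ Finset.range (m + 1), e j i * A i := by
  have hdvd : ∀ i ≤ m, A i ∣ L := by
    intro i hi
    rw [hL]
    exact Finset.dvd_lcm (Finset.mem_range_succ_iff.2 hi)
  have hLpos : 0 < L := by
    refine Nat.pos_of_ne_zero fun h0 => ?_
    rw [hL] at h0
    rw [Finset.lcm_eq_zero_iff] at h0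
    obtain ⟨i, hi, hAi⟩ := h0
    rw [Finset.mem_range_succ_iff] at hi
    exact (hApos i hi).ne' hAi
  have haA : ∀ i ≤ m, a i * A i = L := by
    intro i hi
    rw [ha i hi]
    exact Nat.div_mul_cancel (hdvd i hi)
  exact stmt17_aux m L hm hLpos A a hApos haA p hp c hc
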